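/- Bernoulli-type step (Max wins, all-pay Richman invariant): let α ∈ (0,1), c = λ(α) = -log(1-α)/log(1+α), S > 0, s ≥ 0, B > 0, and suppose 0 ≤ y < x ≤ αBs/S with s ≤ S. If B ≥ (1+α)^((L-H)/(2S)), then B + y - x ≥ (1+α)^((L + ΔL - H - cs)/(2S)), where ΔL = c(s + 2S(y-x)/(αB)). -/

import Mathlib

/-- Bernoulli-type step (Max wins) in the all-pay Richman invariant:
with `c = λ(α) = -log(1-α)/log(1+α)`, if `B ≥ (1+α)^((L-H)/(2S))` and
`0 ≤ y < x ≤ αBs/S` with `s ≤ S`, then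
`B + y - x ≥ (1+α)^((L + ΔL - H - cs)/(2S))` where `ΔL = c(s + 2S(y-x)/(αB))`. -/
theorem richman_invariant_max_wins (α c S s B x y L H : ℝ)
    (hα : α ∈ Set.Ioo (0:ℝ) 1) (hc : c = -Real.log (1 - α) / Real.log (1 + α))
    (hS : 0 < S) (hs : 0 ≤ s) (hsS : s ≤ S) (hB : 0 < B)
    (hy : 0 ≤ y) (hyx : y < x) (hx : x ≤ α * B * s / S)
    (hinv : B ≥ (1 + α) ^ ((L - H) / (2 * S))) :
    B + y - x ≥ (1 + α) ^ ((L + c * (s + 2 * S * (y - x) / (α * B)) - H - c * s) / (2 * S)) := by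
  obtain ⟨hα0, hα1⟩ := hα
  have hαB : 0 < α * B := mul_pos hα0 hB
  set t : ℝ := (x - y) / (α * B) with ht
  have ht0 : 0 ≤ t := div_nonneg (by linarith) hαB.le
  have hxy_le : x - y ≤ α * B := by
    have : α * B * s / S ≤ α * B := by
      rw [div_le_iff₀ hS]
      nlinarith
    linarith
  have ht1 : t ≤ 1 := by
    rw [ht, div_le_one hαB]; exact hxy_le
  have h1α : (1:ℝ) < 1 + α := by linarith
  have hlog : 0 < Real.log (1 + α) := Real.log_pos h1α
  have hbase : (0:ℝ) < 1 + α := by linarith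
  -- exponent rewrite
  have hexp : (L + c * (s + 2 * S * (y - x) / (α * B)) - H - c * s) / (2 * S)
      = (L - H) / (2 * S) + (-c) * t := by
    rw [ht]
    field_simp [ht]
    ring
  rw [hexp, Real.rpow_add hbase]
  -- (1+α)^(-c) = 1-α
  have hkey : (1 + α) ^ ((-c) * t) = (1 - α) ^ t := by
    rw [Real.rpow_mul hbase.le]
    congr 1
    rw [Real.rpow_def_of_pos hbase, hc]
    rw [show Real.log (1 + α) * -(-Real.log (1 - α) / Real.log (1 + α))
        = Real.log (1 - α) by field_simp]
    exact Real.exp_log (by linarith)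
  rw [hkey]
  have hbern : (1 - α) ^ t ≤ 1 - t * α := by
    have := rpow_one_add_le_one_add_mul_self (s := -α) (by linarith) ht0 ht1
    simpa [sub_eq_add_neg, mul_comm] using this
  have hnn : (0:ℝ) ≤ (1 - α) ^ t := Real.rpow_nonneg (by linarith) t
  have h2 : (1 + α) ^ ((L - H) / (2 * S)) * (1 - α) ^ t ≤ B * (1 - t * α) := by
    apply mul_le_mul hinv hbern hnn hB.le
  have h3 : B * (1 - t * α) = B + y - x := by
    rw [ht]; field_simp; ring
  linarith
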